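/- Let X_0 = {a}, X_1, ..., X_k be the similarity layers of a symmetric matrix A rooted at a, and assume V = X_0 ∪ ... ∪ X_k. Then the last layer X_k is homogeneous for A; moreover, if X_k = {b} is a singleton, then b is critical for A. -/

import Mathlib

/-- The consecutive pairs of `l` avoid `z` with respect to the matrix `A`. -/
def AvoidChain {V : Type*} (A : V → V → ℝ) (z : V) (l : List V) : Prop :=
  l.Chain' fun u w => min (A u z) (A w z) < A u w

/-- `l` is a path from `x` to `y` avoiding `z` in `A`: a sequence of distinct
elements starting at `x`, ending at `y`, each consecutive pair avoiding `z`. -/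
def AvoidPath {V : Type*} (A : V → V → ℝ) (z x y : V) (l : List V) : Prop :=
  l.Nodup ∧ l.head? = some x ∧ l.getLast? = some y ∧ AvoidChain A z l

/-- `x ~^z y`: there is a path from `x` to `y` avoiding `z` in `A`. -/
def Avoids {V : Type*} (A : V → V → ℝ) (z x y : V) : Prop :=
  ∃ l, AvoidPath A z x y l

/-- `{x,y,z}` is a weighted asteroidal triple of `A`. -/
def IsWAT {V : Type*} (A : V → V → ℝ) (x y z : V) : Prop :=
  x ≠ y ∧ y ≠ z ∧ x ≠ z ∧ Avoids A z x y ∧ Avoids A x y z ∧ Avoids A y z x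

/-- `π` is a Robinson ordering of `A`. -/
def IsRobinsonOrdering {V : Type*} [Fintype V] (A : V → V → ℝ)
    (π : Fin (Fintype.card V) ≃ V) : Prop :=
  ∀ i j k : Fin (Fintype.card V), i < j → j < k →
    A (π i) (π k) ≤ min (A (π i) (π j)) (A (π j) (π k))

/-- `A` is Robinsonian: it admits a Robinson ordering. -/
def Robinsonian {V : Type*} [Fintype V] (A : V → V → ℝ) : Prop :=
  ∃ π : Fin (Fintype.card V) ≃ V, IsRobinsonOrdering A π

/-- `S` is strongly homogeneous for `A`. -/
def StronglyHomogeneous {V : Type*} [DecidableEq V] (A : V → V → ℝ) (S : Finset V) : Prop :=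
  ∀ x ∉ S, ∀ y ∈ S, ∀ z ∈ S, A x y = A x z ∧ A x y ≤ A y z

/-- `a` is critical for `A`: between any two distinct elements of `V \ {a}`
there is a path avoiding `a`. -/
def IsCritical {V : Type*} (A : V → V → ℝ) (a : V) : Prop :=
  ∀ x y : V, x ≠ a → y ≠ a → x ≠ y → Avoids A a x y

/-- The similarity layers of `A` rooted at `a`, together with the union of the
layers so far: `(simLayersAux A a n).1` is the `n`-th layer `X_n` and
`(simLayersAux A a n).2 = X_0 ∪ ⋯ ∪ X_n`. -/
def simLayersAux {V : Type*} (A : V → V → ℝ) (a : V) : ℕ → Set V × Set V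
  | 0 => ({a}, {a})
  | n + 1 =>
    let U := (simLayersAux A a n).2
    let L := { y | y ∉ U ∧ ∀ x ∈ U, ∀ z ∉ U, A x z ≤ A x y }
    (L, U ∪ L)

/-- The `n`-th similarity layer `X_n` of `A` rooted at `a`. -/
def simLayer {V : Type*} (A : V → V → ℝ) (a : V) (n : ℕ) : Set V :=
  (simLayersAux A a n).1

section Aux

variable {V : Type*}

private lemma avoids_of_rtg (A : V → V → ℝ) (b : V) {x y : V}
    (h : Relation.ReflTransGen (fun u w => min (A u b) (A w b) < A u w) x y) :
    Avoids A b x y := by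
  induction h with
  | refl => exact ⟨[x], List.nodup_singleton x, rfl, rfl, List.isChain_singleton x⟩
  | tail _ hR ih =>
    rename_i y c _
    obtain ⟨l, hnd, hhead, hlst, hch⟩ := ih
    by_cases hc : c ∈ l
    · obtain ⟨l1, l2, rfl⟩ := List.append_of_mem hc
      have hsplit : l1 ++ c :: l2 = (l1 ++ [c]) ++ l2 := by simp
      rw [hsplit] at hnd hhead hch
      refine ⟨l1 ++ [c], hnd.of_append_left, ?_, List.getLast?_concat, ?_⟩
      · rw [List.head?_append] at hhead
        cases l1 with
        | nil => simpa using hhead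
        | cons h t => simpa using hhead
      · exact ((List.isChain_append).mp hch).1
    · refine ⟨l ++ [c], ?_, ?_, List.getLast?_concat, ?_⟩
      · simp [List.nodup_append, hnd, hc]
        intro a ha h; exact hc (h ▸ ha)
      · rw [List.head?_append, hhead]; rfl
      · refine (List.isChain_append).mpr ⟨hch, List.isChain_singleton c, ?_⟩
        intro u hu w hw
        rw [hlst] at hu
        cases hu
        simp only [List.head?_cons, Option.mem_def, Option.some.injEq] at hw
        subst hw
        exact hR

private lemma simU_succ (A : V → V → ℝ) (a : V) (n : ℕ) :
    (simLayersAux A a (n+1)).2 = (simLayersAux A a n).2 ∪ simLayer A a (n+1) := rfl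

private lemma mem_simLayer_succ (A : V → V → ℝ) (a : V) {y : V} {n : ℕ} :
    y ∈ simLayer A a (n+1) ↔ y ∉ (simLayersAux A a n).2 ∧
      ∀ x ∈ (simLayersAux A a n).2, ∀ z ∉ (simLayersAux A a n).2, A x z ≤ A x y := Iff.rfl

private lemma simLayer_subset_simU (A : V → V → ℝ) (a : V) (n : ℕ) :
    simLayer A a n ⊆ (simLayersAux A a n).2 := by
  cases n with
  | zero => exact subset_rfl
  | succ n => exact Set.subset_union_right

private lemma simU_mono (A : V → V → ℝ) (a : V) {m n : ℕ} (h : m ≤ n) :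
    (simLayersAux A a m).2 ⊆ (simLayersAux A a n).2 := by
  induction n with
  | zero => simpa [Nat.le_zero.mp h] using subset_rfl
  | succ n ih =>
    rcases Nat.lt_succ_iff_lt_or_eq.mp (Nat.lt_succ_of_le h) with h' | h'
    · exact (ih (Nat.lt_succ_iff.mp h')).trans
        (by rw [simU_succ]; exact Set.subset_union_left)
    · subst h'; exact subset_rfl

private lemma mem_simU_iff (A : V → V → ℝ) (a : V) {v : V} {n : ℕ} :
    v ∈ (simLayersAux A a n).2 ↔ ∃ j ≤ n, v ∈ simLayer A a j := by
  induction n with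
  | zero =>
    constructor
    · intro h; exact ⟨0, le_refl 0, h⟩
    · rintro ⟨j, hj, hv⟩; rw [Nat.le_zero.mp hj] at hv; exact hv
  | succ n ih =>
    rw [simU_succ, Set.mem_union, ih]
    constructor
    · rintro (⟨j, hj, hv⟩ | hv)
      · exact ⟨j, hj.trans (Nat.le_succ n), hv⟩
      · exact ⟨n + 1, le_refl _, hv⟩
    · rintro ⟨j, hj, hv⟩
      rcases Nat.lt_succ_iff_lt_or_eq.mp (Nat.lt_succ_of_le hj) with h' | h'
      · exact Or.inl ⟨j, Nat.lt_succ_iff.mp h', hv⟩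
      · subst h'; exact Or.inr hv

end Aux

theorem stmt_11 {V : Type*} (A : V → V → ℝ)
    (hsym : ∀ u v : V, A u v = A v u) (a : V) (k : ℕ)
    (hne : (simLayer A a k).Nonempty)
    (hlast : ∀ j : ℕ, k < j → simLayer A a j = ∅)
    (hcov : ∀ v : V, ∃ i ≤ k, v ∈ simLayer A a i) :
    (∀ x ∉ simLayer A a k, ∀ y ∈ simLayer A a k, ∀ z ∈ simLayer A a k,
        A x y = A x z) ∧
    (∀ b : V, simLayer A a k = {b} → IsCritical A b) := by
  constructor
  · -- homogeneity
    intro x hx y hy z hz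
    obtain ⟨i, hik, hxi⟩ := hcov x
    have hik' : i < k := by
      rcases lt_or_eq_of_le hik with h | h
      · exact h
      · subst h; exact absurd hxi hx
    obtain ⟨m, rfl⟩ : ∃ m, k = m + 1 := ⟨k - 1, (Nat.succ_pred_eq_of_pos (Nat.zero_lt_of_lt hik')).symm⟩
    have hxU : x ∈ (simLayersAux A a m).2 :=
      simU_mono A a (Nat.lt_succ_iff.mp hik') ((simLayer_subset_simU A a i).trans subset_rfl hxi)
    obtain ⟨-, hy2⟩ := (mem_simLayer_succ A a).mp hy
    obtain ⟨hz1, hz2⟩ := (mem_simLayer_succ A a).mp hz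
    have hy1 := ((mem_simLayer_succ A a).mp hy).1
    exact le_antisymm (hz2 x hxU y hy1) (hy2 x hxU z hz1)
  · -- criticality
    intro b hb x y hx hy hxy
    set R : V → V → Prop := fun u w => min (A u b) (A w b) < A u w with hR
    have hRsymm : ∀ u w, R u w → R w u := by
      intro u w h
      have h' : min (A u b) (A w b) < A u w := h
      show min (A w b) (A u b) < A w u
      rw [min_comm, ← hsym u w]
      exact h' 
    -- every vertex ≠ b reaches a
    have key : ∀ i : ℕ, ∀ v ∈ simLayer A a i, v ≠ b → Relation.ReflTransGen R v a := by
      intro i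
      induction i using Nat.strong_induction_on with
      | _ i ih =>
        intro v hv hvb
        have hik : i ≤ k := by
          by_contra h
          rw [hlast i (Nat.lt_of_not_le h)] at hv
          exact hv
        have hik' : i < k := by
          rcases lt_or_eq_of_le hik with h | h
          · exact h
          · subst h; rw [hb] at hv; exact absurd hv hvb
        cases i with
        | zero =>
          cases hv
          exact Relation.ReflTransGen.refl
        | succ m =>
          -- b not in layer m+1 and not in U_m
          obtain ⟨n, rfl⟩ : ∃ n, k = n + 1 :=
            ⟨k - 1, (Nat.succ_pred_eq_of_pos (Nat.zero_lt_of_lt hik')).symm⟩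
          have hbk : b ∈ simLayer A a (n+1) := by rw [hb]; rfl
          have hbU : b ∉ (simLayersAux A a n).2 := ((mem_simLayer_succ A a).mp hbk).1
          have hm1n : m + 1 ≤ n := Nat.lt_succ_iff.mp hik'
          have hmn : m ≤ n := Nat.le_of_succ_le hm1n
          have hbUm : b ∉ (simLayersAux A a m).2 := fun h => hbU (simU_mono A a hmn h)
          have hbL : b ∉ simLayer A a (m+1) := fun h =>
            hbU (simU_mono A a hm1n ((simLayer_subset_simU A a (m+1)) h))
          rw [mem_simLayer_succ] at hbL
          push_neg at hbL
          obtain ⟨u, huU, z, hzU, huz⟩ := hbL hbUm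
          obtain ⟨hv1, hv2⟩ := (mem_simLayer_succ A a).mp hv
          have hRvu : R v u := by
            have h1 : A u b < A u v := lt_of_lt_of_le huz (hv2 u huU z hzU)
            calc min (A v b) (A u b) ≤ A u b := min_le_right _ _
              _ < A u v := h1
              _ = A v u := hsym u v
          obtain ⟨j, hjm, huj⟩ := (mem_simU_iff A a).mp huU
          have hub : u ≠ b := fun h => hbUm (h ▸ huU)
          exact Relation.ReflTransGen.head hRvu
            (ih j (Nat.lt_succ_of_le hjm) u huj hub)
    obtain ⟨i, _, hxi⟩ := hcov x
    obtain ⟨j, _, hyj⟩ := hcov y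
    have hxa := key i x hxi hx
    have hya := key j y hyj hy
    have hay : Relation.ReflTransGen R a y :=
      by haveI : Std.Symm R := ⟨hRsymm⟩; exact Std.Symm.symm _ _ hya
    exact avoids_of_rtg A b (hxa.trans hay)
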